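/- arXiv:1511.01050 — 5 statements merged into one kernel-verified Lean document; each statement's English description precedes it below -/
import Mathlib

section
/- The fractional chromatic number is multiplicative under the disjunctive graph product: χ_f(Γ₁ * Γ₂) = χ_f(Γ₁) · χ_f(Γ₂) for finite simple graphs Γ₁, Γ₂. -/
/-- A `b`-fold coloring of `Γ` with `k` colors: each vertex gets a `b`-element set of
colors, adjacent vertices get disjoint sets. -/
def IsNFoldColoring {V : Type*} (Γ : SimpleGraph V) (b k : ℕ)
    (c : V → Finset (Fin k)) : Prop :=
  (∀ v, (c v).card = b) ∧ ∀ u v, Γ.Adj u v → Disjoint (c u) (c v)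

/-- The `b`-fold chromatic number `χ^(b)(Γ)`. -/
noncomputable def nfoldChromaticNumber {V : Type*} (Γ : SimpleGraph V) (b : ℕ) : ℕ :=
  sInf {k | ∃ c : V → Finset (Fin k), IsNFoldColoring Γ b k c}

/-- The fractional chromatic number `χ_f(Γ) = inf_b χ^(b)(Γ)/b`. -/
noncomputable def fracChromaticNumber {V : Type*} (Γ : SimpleGraph V) : ℝ :=
  ⨅ b : ℕ+, (nfoldChromaticNumber Γ b : ℝ) / (b : ℝ)

/-- `s` is an independent set of `Γ`. -/
def IsIndepFinset {V : Type*} (Γ : SimpleGraph V) (s : Finset V) : Prop :=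
  ∀ u ∈ s, ∀ v ∈ s, ¬ Γ.Adj u v

/-- The independence number `α(Γ)`. -/
noncomputable def indepNum {V : Type*} [Fintype V] (Γ : SimpleGraph V) : ℕ :=
  sSup {k | ∃ s : Finset V, s.card = k ∧ IsIndepFinset Γ s}

/-- `Γ` is vertex transitive. -/
def IsVertexTransitive {V : Type*} (Γ : SimpleGraph V) : Prop :=
  ∀ u v : V, ∃ σ : Γ ≃g Γ, σ u = v

/-- The confusion graph `Γ_t(G)` of the directed graph `G` on `[n]` with edge
relation `E` (an edge `i → j` means `E i j`), for the integer tuple `t`.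
Vertices are tuples `x` with `x i ∈ {0,1}^{t i}`; two tuples are adjacent iff
they are confusable at some node `j`. -/
def confusionGraph (n : ℕ) (E : Fin n → Fin n → Prop) (t : Fin n → ℕ) :
    SimpleGraph ((i : Fin n) → Fin (t i) → Bool) where
  Adj x z := ∃ j, x j ≠ z j ∧ ∀ i, E i j → x i = z i
  symm := by
    constructor
    rintro x z ⟨j, hj, h⟩
    exact ⟨j, fun h' => hj h'.symm, fun i hi => (h i hi).symm⟩
  loopless := by
    constructor
    rintro x ⟨j, hj, -⟩
    exact hj rfl

/-- The disjunctive product of two simple graphs. -/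
def disjProd {V₁ V₂ : Type*} (Γ₁ : SimpleGraph V₁) (Γ₂ : SimpleGraph V₂) :
    SimpleGraph (V₁ × V₂) where
  Adj u v := Γ₁.Adj u.1 v.1 ∨ Γ₂.Adj u.2 v.2
  symm := by constructor; rintro u v (h | h); exacts [Or.inl h.symm, Or.inr h.symm]
  loopless := by constructor; rintro u (h | h) <;> exact h.ne rfl

section Aux

open Finset

attribute [local instance] Classical.propDecidable
set_option linter.unusedSectionVars false

variable {V : Type*} [Fintype V] (Γ : SimpleGraph V)

lemma isIndepFinset_singleton (v : V) : IsIndepFinset Γ {v} := by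
  intro a ha b hb hab
  rw [Finset.mem_singleton] at ha hb
  subst ha; subst hb
  exact Γ.loopless.irrefl _ hab

/-- A fractional clique. -/
def FracClique (y : V → ℝ) : Prop :=
  (∀ v, 0 ≤ y v) ∧ ∀ s : Finset V, IsIndepFinset Γ s → ∑ v ∈ s, y v ≤ 1

lemma fracClique_sum_le {b k : ℕ} {c : V → Finset (Fin k)}
    (hc : IsNFoldColoring Γ b k c) {y : V → ℝ} (hy : FracClique Γ y) :
    (b : ℝ) * ∑ v, y v ≤ k := by
  have hclass : ∀ α : Fin k, ∑ v, (if α ∈ c v then y v else 0) ≤ 1 := by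
    intro α
    rw [← Finset.sum_filter]
    refine hy.2 _ ?_
    intro u hu w hw hadj
    rw [Finset.mem_filter] at hu hw
    exact Finset.disjoint_left.mp (hc.2 u w hadj) hu.2 hw.2
  have key : (b : ℝ) * ∑ v, y v = ∑ α : Fin k, ∑ v, (if α ∈ c v then y v else 0) := by
    rw [Finset.mul_sum]
    rw [Finset.sum_comm (s := univ) (t := univ)]
    refine Finset.sum_congr rfl fun v _ => ?_
    rw [Finset.sum_ite_mem, Finset.univ_inter, Finset.sum_const, hc.1 v, nsmul_eq_mul]
  rw [key]
  calc ∑ α : Fin k, ∑ v, (if α ∈ c v then y v else 0) ≤ ∑ _α : Fin k, (1:ℝ) :=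
        Finset.sum_le_sum fun α _ => hclass α
    _ = k := by simp

lemma exists_nfold_coloring (b : ℕ) :
    ∃ c : V → Finset (Fin (Fintype.card V * b)),
      IsNFoldColoring Γ b (Fintype.card V * b) c := by
  let e := Fintype.equivFin V
  have hinj : ∀ v : V, Function.Injective fun j : Fin b => finProdFinEquiv (e v, j) := by
    intro v j j' h
    have := finProdFinEquiv.injective h
    simpa using congrArg Prod.snd this
  refine ⟨fun v => univ.image fun j : Fin b => finProdFinEquiv (e v, j), ?_, ?_⟩
  · intro v
    rw [Finset.card_image_of_injective _ (hinj v), Finset.card_univ, Fintype.card_fin]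
  · intro u w hadj
    rw [Finset.disjoint_left]
    rintro x hx hx'
    simp only [Finset.mem_image, Finset.mem_univ, true_and] at hx hx'
    obtain ⟨j, rfl⟩ := hx
    obtain ⟨j', hj'⟩ := hx'
    have := finProdFinEquiv.injective hj'
    have huv : u = w := e.injective (congrArg Prod.fst this).symm
    exact hadj.ne huv

lemma nfold_le {b k : ℕ} (c : V → Finset (Fin k)) (hc : IsNFoldColoring Γ b k c) :
    nfoldChromaticNumber Γ b ≤ k := Nat.sInf_le ⟨c, hc⟩

lemma nfold_spec (b : ℕ) :
    ∃ c : V → Finset (Fin (nfoldChromaticNumber Γ b)),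
      IsNFoldColoring Γ b (nfoldChromaticNumber Γ b) c := by
  have hne : {k | ∃ c : V → Finset (Fin k), IsNFoldColoring Γ b k c}.Nonempty :=
    ⟨_, exists_nfold_coloring Γ b⟩
  exact Nat.sInf_mem hne

lemma frac_bddBelow :
    BddBelow (Set.range fun b : ℕ+ => (nfoldChromaticNumber Γ b : ℝ) / b) := by
  refine ⟨0, ?_⟩
  rintro x ⟨b, rfl⟩
  positivity

lemma frac_le_nfold (b : ℕ+) :
    fracChromaticNumber Γ ≤ (nfoldChromaticNumber Γ b : ℝ) / b :=
  ciInf_le (frac_bddBelow Γ) b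

lemma le_frac {a : ℝ} (h : ∀ b : ℕ+, a ≤ (nfoldChromaticNumber Γ b : ℝ) / b) :
    a ≤ fracChromaticNumber Γ := le_ciInf h

lemma frac_nonneg : 0 ≤ fracChromaticNumber Γ :=
  Real.iInf_nonneg fun b => by positivity

lemma nfold_isEmpty [IsEmpty V] (b : ℕ) : nfoldChromaticNumber Γ b = 0 := by
  have h0 : (0:ℕ) ∈ {k | ∃ c : V → Finset (Fin k), IsNFoldColoring Γ b k c} :=
    ⟨fun v => isEmptyElim v, fun v => isEmptyElim v, fun u => isEmptyElim u⟩
  exact Nat.sInf_eq_zero.mpr (Or.inl h0)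

lemma frac_isEmpty [IsEmpty V] : fracChromaticNumber Γ = 0 := by
  have h : ∀ b : ℕ+, (nfoldChromaticNumber Γ b : ℝ) / b = 0 := fun b => by
    rw [nfold_isEmpty]; simp
  calc fracChromaticNumber Γ = ⨅ _b : ℕ+, (0:ℝ) := by
        unfold fracChromaticNumber
        exact congrArg _ (funext h)
    _ = 0 := ciInf_const

lemma pnat_le_nfold [Nonempty V] (b : ℕ+) : (b : ℕ) ≤ nfoldChromaticNumber Γ b := by
  obtain ⟨c, hc⟩ := nfold_spec Γ b
  have v := Classical.arbitrary V
  calc (b:ℕ) = (c v).card := (hc.1 v).symm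
    _ ≤ Fintype.card (Fin (nfoldChromaticNumber Γ b)) := Finset.card_le_univ _
    _ = nfoldChromaticNumber Γ b := Fintype.card_fin _

lemma one_le_frac [Nonempty V] : 1 ≤ fracChromaticNumber Γ := by
  refine le_frac Γ fun b => ?_
  rw [le_div_iff₀ (by positivity), one_mul]
  exact_mod_cast pnat_le_nfold Γ b


lemma nfold_le_of_nat_feasible (b : ℕ)
    (n : {I : Finset V // IsIndepFinset Γ I} → ℕ)
    (hfeas : ∀ v : V,
      b ≤ ∑ I : {I : Finset V // IsIndepFinset Γ I}, if v ∈ I.1 then n I else 0) :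
    nfoldChromaticNumber Γ b ≤ ∑ I : {I : Finset V // IsIndepFinset Γ I}, n I := by
  have hcard : Fintype.card (Σ I : {I : Finset V // IsIndepFinset Γ I}, Fin (n I))
      = ∑ I : {I : Finset V // IsIndepFinset Γ I}, n I := by
    simp [Fintype.card_sigma]
  let e : (Σ I : {I : Finset V // IsIndepFinset Γ I}, Fin (n I))
      ≃ Fin (∑ I : {I : Finset V // IsIndepFinset Γ I}, n I) := Fintype.equivFinOfCardEq hcard
  set avail : V → Finset (Fin (∑ I : {I : Finset V // IsIndepFinset Γ I}, n I)) :=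
    fun v => univ.filter fun x => v ∈ (e.symm x).1.1 with havaildef
  have havail : ∀ v, b ≤ (avail v).card := by
    intro v
    have h1 : avail v
        = (univ.filter fun σ : Σ I : {I : Finset V // IsIndepFinset Γ I}, Fin (n I) =>
            v ∈ σ.1.1).image e := by
      ext x
      simp only [havaildef, Finset.mem_filter, Finset.mem_univ, true_and,
        Finset.mem_image]
      constructor
      · intro hx; exact ⟨e.symm x, hx, by simp⟩
      · rintro ⟨σ, hσ, rfl⟩; simpa using hσ
    rw [h1, Finset.card_image_of_injective _ e.injective, Finset.card_filter,
      ← Finset.univ_sigma_univ, Finset.sum_sigma]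
    refine le_trans (hfeas v) (le_of_eq ?_)
    refine Finset.sum_congr rfl fun I _ => ?_
    by_cases hv : v ∈ I.1 <;> simp [hv]
  have hchoose : ∀ v, ∃ t ⊆ avail v, t.card = b := fun v =>
    Finset.exists_subset_card_eq (havail v)
  choose c hsub hcardc using hchoose
  refine nfold_le Γ c ⟨hcardc, ?_⟩
  intro u w hadj
  rw [Finset.disjoint_left]
  intro x hxu hxw
  have hu := hsub u hxu
  have hw := hsub w hxw
  simp only [havaildef, Finset.mem_filter] at hu hw
  exact (e.symm x).1.2 u hu.2 w hw.2 hadj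

lemma frac_le_of_feasible (x : {I : Finset V // IsIndepFinset Γ I} → ℝ)
    (hx0 : ∀ I, 0 ≤ x I)
    (hfeas : ∀ v : V,
      1 ≤ ∑ I : {I : Finset V // IsIndepFinset Γ I}, if v ∈ I.1 then x I else 0) :
    fracChromaticNumber Γ ≤ ∑ I : {I : Finset V // IsIndepFinset Γ I}, x I := by
  have main : ∀ b : ℕ+, fracChromaticNumber Γ
      ≤ ∑ I : {I : Finset V // IsIndepFinset Γ I}, x I
        + (Fintype.card {I : Finset V // IsIndepFinset Γ I} : ℝ) / b := by
    intro b
    set n : {I : Finset V // IsIndepFinset Γ I} → ℕ := fun I => ⌈x I * b⌉₊ with hn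
    have hb0 : (0:ℝ) < (b : ℝ) := by positivity
    have hfb : ∀ v, (b : ℕ) ≤ ∑ I : {I : Finset V // IsIndepFinset Γ I},
        if v ∈ I.1 then n I else 0 := by
      intro v
      have hreal : (b : ℝ) ≤ ∑ I : {I : Finset V // IsIndepFinset Γ I},
          if v ∈ I.1 then (n I : ℝ) else 0 := by
        have h1 : (b : ℝ) ≤ (∑ I : {I : Finset V // IsIndepFinset Γ I},
            if v ∈ I.1 then x I else 0) * b :=
          le_mul_of_one_le_left hb0.le (hfeas v)
        refine h1.trans ?_
        rw [Finset.sum_mul]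
        refine Finset.sum_le_sum fun I _ => ?_
        by_cases h : v ∈ I.1 <;> simp [h, hn]
        exact Nat.le_ceil _
      exact_mod_cast hreal
    have h3 := nfold_le_of_nat_feasible Γ b n hfb
    calc fracChromaticNumber Γ ≤ (nfoldChromaticNumber Γ b : ℝ) / b := frac_le_nfold Γ b
      _ ≤ (∑ I : {I : Finset V // IsIndepFinset Γ I}, (n I : ℝ)) / b := by
          gcongr
          exact_mod_cast h3
      _ ≤ (∑ I : {I : Finset V // IsIndepFinset Γ I}, (x I * b + 1)) / b := by
          gcongr with I
          refine (Nat.ceil_lt_add_one ?_).le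
          exact mul_nonneg (hx0 I) hb0.le
      _ = ∑ I : {I : Finset V // IsIndepFinset Γ I}, x I
          + (Fintype.card {I : Finset V // IsIndepFinset Γ I} : ℝ) / b := by
          rw [Finset.sum_add_distrib, ← Finset.sum_mul, Finset.sum_const,
            Finset.card_univ, nsmul_eq_mul, mul_one, add_div, mul_div_assoc,
            div_self hb0.ne', mul_one]
  refine le_of_forall_pos_le_add fun ε hε => ?_
  obtain ⟨m, hm⟩ := exists_nat_gt
    ((Fintype.card {I : Finset V // IsIndepFinset Γ I} : ℝ) / ε)
  set b : ℕ+ := ⟨m + 1, Nat.succ_pos m⟩ with hbdef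
  refine (main b).trans ?_
  have hbv : ((b : ℕ) : ℝ) = (m : ℝ) + 1 := by
    show (((m+1 : ℕ)) : ℝ) = (m : ℝ) + 1
    push_cast; ring
  have h1 : (Fintype.card {I : Finset V // IsIndepFinset Γ I} : ℝ) < m * ε :=
    (div_lt_iff₀ hε).mp hm
  have hb0 : (0:ℝ) < ((b:ℕ):ℝ) := by positivity
  have h2 : (Fintype.card {I : Finset V // IsIndepFinset Γ I} : ℝ) / b ≤ ε := by
    rw [div_le_iff₀ hb0, hbv]
    nlinarith [hε.le, (by positivity : (0:ℝ) ≤ (m:ℝ))]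
  linarith


lemma continuous_finsetInf' {ι : Type*} (s : Finset ι) (hs : s.Nonempty) :
    Continuous fun p : ι → ℝ => s.inf' hs p := by
  induction s using Finset.cons_induction with
  | empty => exact absurd hs (by simp)
  | cons a s ha ih =>
    rcases s.eq_empty_or_nonempty with rfl | hs'
    · simpa using continuous_apply a
    · have hfe : (fun p : ι → ℝ => (Finset.cons a s ha).inf' hs p)
          = fun p : ι → ℝ => min (p a) (s.inf' hs' p) := by
        funext p
        rw [Finset.inf'_cons]
      rw [hfe]
      exact (continuous_apply a).min (ih hs')

lemma exists_optimal_fracClique [Nonempty V] :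
    ∃ y : V → ℝ, FracClique Γ y ∧ fracChromaticNumber Γ ≤ ∑ v, y v := by
  -- the linear map from weightings of independent sets to vertex functions
  set Φ : ({I : Finset V // IsIndepFinset Γ I} → ℝ) → (V → ℝ) :=
    fun w v => ∑ I : {I : Finset V // IsIndepFinset Γ I}, if v ∈ I.1 then w I else 0
    with hΦdef
  have hΦcont : Continuous Φ := by
    refine continuous_pi fun v => ?_
    refine continuous_finset_sum _ fun I _ => ?_
    by_cases h : v ∈ I.1 <;> simp only [h, if_true, if_false]
    · exact continuous_apply I
    · exact continuous_const
  set P : Set (V → ℝ) := Φ '' stdSimplex ℝ {I : Finset V // IsIndepFinset Γ I} with hPdef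
  have hPcpt : IsCompact P := (isCompact_stdSimplex _ _).image hΦcont
  have hPconv : Convex ℝ P := by
    rintro _ ⟨w₁, hw₁, rfl⟩ _ ⟨w₂, hw₂, rfl⟩ a b ha hb hab
    refine ⟨a • w₁ + b • w₂, convex_stdSimplex ℝ _ hw₁ hw₂ ha hb hab, ?_⟩
    funext v
    simp only [hΦdef, Pi.add_apply, Pi.smul_apply, smul_eq_mul]
    rw [Finset.mul_sum, Finset.mul_sum, ← Finset.sum_add_distrib]
    refine Finset.sum_congr rfl fun I _ => ?_
    by_cases h : v ∈ I.1 <;> simp [h]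
  have hVne : (univ : Finset V).Nonempty := univ_nonempty
  set m : (V → ℝ) → ℝ := fun p => univ.inf' hVne p with hmdef
  have hmcont : Continuous m := continuous_finsetInf' univ hVne
  -- the uniform weighting on singletons
  have hNpos : (0:ℝ) < Fintype.card V := by
    have := Fintype.card_pos (α := V); positivity
  set w₀ : {I : Finset V // IsIndepFinset Γ I} → ℝ :=
    fun I => if I.1.card = 1 then 1 / Fintype.card V else 0 with hw₀def
  have hcount : ∑ I : {I : Finset V // IsIndepFinset Γ I},
      (if I.1.card = 1 then (1:ℝ) else 0) = Fintype.card V := by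
    rw [Finset.sum_boole]
    norm_num
    refine (Finset.card_bij (fun v _ => ⟨{v}, isIndepFinset_singleton Γ v⟩) ?_ ?_ ?_).symm
    · intro v _
      simp
    · intro v _ v' _ h
      simpa using h
    · intro I hI
      rw [Finset.mem_filter] at hI
      obtain ⟨v, hv⟩ := Finset.card_eq_one.mp hI.2
      exact ⟨v, Finset.mem_univ v, by simp [← hv]⟩
  have hw₀mem : w₀ ∈ stdSimplex ℝ {I : Finset V // IsIndepFinset Γ I} := by
    constructor
    · intro I
      rw [hw₀def]
      by_cases h : I.1.card = 1 <;> simp [h] <;> positivity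
    · have h1 : ∑ I : {I : Finset V // IsIndepFinset Γ I}, w₀ I
          = (∑ I : {I : Finset V // IsIndepFinset Γ I},
              if I.1.card = 1 then (1:ℝ) else 0) / Fintype.card V := by
        rw [Finset.sum_div]
        refine Finset.sum_congr rfl fun I _ => ?_
        by_cases h : I.1.card = 1 <;> simp [hw₀def, h]
      rw [h1, hcount, div_self hNpos.ne']
  have hΦw₀ : ∀ v, 1 / (Fintype.card V : ℝ) ≤ Φ w₀ v := by
    intro v
    have hterm : (fun I : {I : Finset V // IsIndepFinset Γ I} =>
        if v ∈ I.1 then w₀ I else 0) ⟨{v}, isIndepFinset_singleton Γ v⟩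
        = 1 / (Fintype.card V : ℝ) := by
      simp [hw₀def]
    calc 1 / (Fintype.card V : ℝ)
        = (fun I : {I : Finset V // IsIndepFinset Γ I} =>
            if v ∈ I.1 then w₀ I else 0) ⟨{v}, isIndepFinset_singleton Γ v⟩ := hterm.symm
      _ ≤ Φ w₀ v := by
          refine Finset.single_le_sum
            (f := fun I : {I : Finset V // IsIndepFinset Γ I} =>
              if v ∈ I.1 then w₀ I else 0) (fun I _ => ?_) (Finset.mem_univ _)
          by_cases h : v ∈ I.1
          · simp only [h, if_true, hw₀def]
            by_cases h2 : I.1.card = 1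
            · simp only [h2, if_true]
              positivity
            · simp [h2]
          · simp [h]
  -- maximize the minimum coordinate over P
  have hPne : P.Nonempty := ⟨Φ w₀, w₀, hw₀mem, rfl⟩
  obtain ⟨pstar, hpP, hpmax⟩ := hPcpt.exists_isMaxOn hPne hmcont.continuousOn
  set t : ℝ := m pstar with htdef
  have hmax : ∀ p ∈ P, m p ≤ t := fun p hp => hpmax hp
  have hpstar_ge : ∀ v, t ≤ pstar v := fun v => Finset.inf'_le _ (Finset.mem_univ v)
  have htpos : (0:ℝ) < t := by
    have h1 : 1 / (Fintype.card V : ℝ) ≤ m (Φ w₀) :=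
      Finset.le_inf' hVne _ fun v _ => hΦw₀ v
    have h2 := hmax _ ⟨w₀, hw₀mem, rfl⟩
    have : (0:ℝ) < 1 / (Fintype.card V : ℝ) := by positivity
    linarith
  -- separation
  set Q : Set (V → ℝ) := {x | ∀ v, t < x v} with hQdef
  have hQiInter : Q = ⋂ v, (fun x : V → ℝ => x v) ⁻¹' Set.Ioi t := by
    ext x; simp [hQdef, Set.mem_iInter]
  have hQopen : IsOpen Q := by
    rw [hQiInter]
    exact isOpen_iInter_of_finite fun v =>
      (isOpen_Ioi).preimage (continuous_apply v)
  have hQconv : Convex ℝ Q := by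
    rw [hQiInter]
    exact convex_iInter fun v => (convex_Ioi t).linear_preimage (LinearMap.proj (R := ℝ) (φ := fun _ : V => ℝ) v)
  have hdisj : Disjoint Q P := by
    rw [Set.disjoint_left]
    rintro p hpQ hpP'
    have hlt : t < m p := (Finset.lt_inf'_iff _).mpr fun v _ => hpQ v
    exact absurd (hmax p hpP') (not_le.mpr hlt)
  obtain ⟨f, u, hfQ, hfP⟩ := geometric_hahn_banach_open hQconv hQopen hPconv hdisj
  -- extract coefficients
  set ecoord : V → (V → ℝ) := fun v => fun j => if v = j then 1 else 0 with hedef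
  set y : V → ℝ := fun v => -f (ecoord v) with hydef
  have hf_eq : ∀ x : V → ℝ, f x = ∑ v, x v * f (ecoord v) := by
    intro x
    conv_lhs => rw [pi_eq_sum_univ x]
    rw [map_sum]
    exact Finset.sum_congr rfl fun v _ => by rw [map_smul]; rfl
  have hsum_eq : ∀ x : V → ℝ, ∑ v, y v * x v = -f x := by
    intro x
    rw [hf_eq x, ← Finset.sum_neg_distrib]
    exact Finset.sum_congr rfl fun v _ => by rw [hydef]; ring
  have hgP : ∀ p ∈ P, ∑ v, y v * p v ≤ -u := by
    intro p hp
    rw [hsum_eq]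
    exact neg_le_neg (hfP p hp)
  have hgQ : ∀ x ∈ Q, -u < ∑ v, y v * x v := by
    intro x hx
    rw [hsum_eq]
    exact neg_lt_neg (hfQ x hx)
  -- nonnegativity of y
  have hy0 : ∀ v, 0 ≤ y v := by
    intro v
    by_contra hneg
    push_neg at hneg
    set A : ℝ := ∑ v', y v' * (t + 1) with hAdef
    set M : ℝ := max 0 ((u + A) / (-y v)) with hMdef
    have hM0 : 0 ≤ M := le_max_left _ _
    set xM : V → ℝ := fun j => (t + 1) + (if v = j then M else 0) with hxMdef
    have hxMQ : xM ∈ Q := by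
      intro j
      by_cases h : v = j <;> simp [hxMdef, h] <;> linarith
    have hsum : ∑ v', y v' * xM v' = A + M * y v := by
      have hterm2 : ∀ v', y v' * xM v'
          = y v' * (t + 1) + (if v = v' then M * y v' else 0) := by
        intro v'
        by_cases h : v = v' <;> simp [hxMdef, h] <;> ring
      rw [Finset.sum_congr rfl fun v' _ => hterm2 v', Finset.sum_add_distrib,
        Finset.sum_ite_eq univ v (fun v' => M * y v')]
      simp only [Finset.mem_univ, if_true, hAdef]
    have hMyv : M * y v ≤ -(u + A) := by
      have h1 : (u + A) / (-y v) ≤ M := le_max_right _ _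
      have h2 : (0:ℝ) < -y v := by linarith
      calc M * y v = -(M * (-y v)) := by ring
        _ ≤ -((u + A) / (-y v) * (-y v)) := by
            have := mul_le_mul_of_nonneg_right h1 h2.le
            linarith [this]
        _ = -(u + A) := by rw [div_mul_cancel₀]; exact h2.ne'
    have hcontra := hgQ xM hxMQ
    rw [hsum] at hcontra
    linarith
  -- positivity of the total weight
  have hySpos : (0:ℝ) < ∑ v, y v := by
    rcases lt_or_eq_of_le (Finset.sum_nonneg fun v _ => hy0 v) with h | h
    · exact h
    · exfalso
      have hall : ∀ v ∈ (univ : Finset V), y v = 0 :=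
        (Finset.sum_eq_zero_iff_of_nonneg fun v _ => hy0 v).mp h.symm
      have hf0 : ∀ x : V → ℝ, f x = 0 := by
        intro x
        rw [hf_eq x]
        refine Finset.sum_eq_zero fun v _ => ?_
        have h5 : y v = 0 := hall v (Finset.mem_univ v)
        have h6 : -f (ecoord v) = 0 := h5
        have h7 : f (ecoord v) = 0 := by linarith
        rw [h7, mul_zero]
      have h1 : (0:ℝ) < u := by
        have := hfQ (fun _ => t + 1) (fun v => lt_add_one t)
        rw [hf0] at this; linarith
      have h2 : u ≤ 0 := by
        have := hfP (Φ w₀) ⟨w₀, hw₀mem, rfl⟩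
        rw [hf0] at this; linarith
      linarith
  -- identify -u with t * ∑ y
  have hcle : -u ≤ t * ∑ v, y v := by
    refine le_of_forall_pos_le_add fun δ hδ => ?_
    set ε : ℝ := δ / ∑ v, y v with hεdef
    have hε : 0 < ε := by positivity
    have hmem : (fun _ : V => t + ε) ∈ Q := fun v => by
      show t < t + ε; linarith
    have := hgQ _ hmem
    have hcalc : ∑ v, y v * (t + ε) = t * ∑ v, y v + δ := by
      rw [← Finset.sum_mul, hεdef]
      field_simp
      try ring
    rw [hcalc] at this
    linarith
  have h1 : t * ∑ v, y v ≤ ∑ v, y v * pstar v := by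
    rw [Finset.mul_sum]
    exact Finset.sum_le_sum fun v _ => by
      have := mul_le_mul_of_nonneg_left (hpstar_ge v) (hy0 v)
      linarith [this]
  have h2 : ∑ v, y v * pstar v ≤ -u := hgP pstar hpP
  have hc : -u = t * ∑ v, y v := le_antisymm hcle (h1.trans h2)
  have hcpos : (0:ℝ) < t * ∑ v, y v := mul_pos htpos hySpos
  -- indicator functions of independent sets are in P
  have hindic : ∀ s : Finset V, ∀ hs : IsIndepFinset Γ s,
      (fun v => if v ∈ s then (1:ℝ) else 0) ∈ P := by
    intro s hs
    refine ⟨fun I => if I = ⟨s, hs⟩ then 1 else 0, ⟨?_, ?_⟩, ?_⟩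
    · intro I; by_cases h : I = ⟨s, hs⟩ <;> simp [h]
    · simp
    · funext v
      rw [hΦdef]
      simp only []
      have hterm : ∀ I : {I : Finset V // IsIndepFinset Γ I},
          (if v ∈ I.1 then (if I = ⟨s, hs⟩ then (1:ℝ) else 0) else 0)
          = if I = ⟨s, hs⟩ then (if v ∈ s then (1:ℝ) else 0) else 0 := by
        intro I
        by_cases h : I = ⟨s, hs⟩
        · subst h; simp
        · simp [h]
      rw [Finset.sum_congr rfl fun I _ => hterm I, Finset.sum_ite_eq' univ]
      simp
  -- the normalized fractional clique
  set ycl : V → ℝ := fun v => y v / (t * ∑ v', y v') with hycldef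
  have hclique : FracClique Γ ycl := by
    constructor
    · intro v
      exact div_nonneg (hy0 v) hcpos.le
    · intro s hs
      have hp := hgP _ (hindic s hs)
      have hsum2 : ∑ v, y v * (if v ∈ s then (1:ℝ) else 0) = ∑ v ∈ s, y v := by
        have h1 : ∀ v, y v * (if v ∈ s then (1:ℝ) else 0) = if v ∈ s then y v else 0 := by
          intro v; by_cases h : v ∈ s <;> simp [h]
        rw [Finset.sum_congr rfl fun v _ => h1 v, Finset.sum_ite_mem, Finset.univ_inter]
      rw [hsum2, hc] at hp
      rw [hycldef]
      simp only []
      rw [← Finset.sum_div]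
      rw [div_le_one hcpos]
      exact hp
  have hval : ∑ v, ycl v = 1 / t := by
    rw [hycldef]
    simp only []
    rw [← Finset.sum_div]
    rw [div_eq_div_iff hcpos.ne' htpos.ne']
    ring
  -- χ_f ≤ 1 / t via the primal feasible solution coming from pstar
  obtain ⟨wst, hwst, hΦwst⟩ := hpP
  have hfrac : fracChromaticNumber Γ ≤ 1 / t := by
    have hfeas2 : ∀ v : V, 1 ≤ ∑ I : {I : Finset V // IsIndepFinset Γ I},
        if v ∈ I.1 then wst I / t else 0 := by
      intro v
      have hsum3 : ∑ I : {I : Finset V // IsIndepFinset Γ I},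
          (if v ∈ I.1 then wst I / t else 0)
          = (∑ I : {I : Finset V // IsIndepFinset Γ I},
              if v ∈ I.1 then wst I else 0) / t := by
        rw [Finset.sum_div]
        refine Finset.sum_congr rfl fun I _ => ?_
        by_cases h : v ∈ I.1 <;> simp [h]
      rw [hsum3]
      have hpv : (∑ I : {I : Finset V // IsIndepFinset Γ I},
          if v ∈ I.1 then wst I else 0) = pstar v := congrFun hΦwst v
      rw [hpv, le_div_iff₀ htpos, one_mul]
      exact hpstar_ge v
    have hle := frac_le_of_feasible Γ (fun I => wst I / t)
      (fun I => div_nonneg (hwst.1 I) htpos.le) hfeas2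
    have hval2 : ∑ I : {I : Finset V // IsIndepFinset Γ I}, wst I / t = 1 / t := by
      rw [← Finset.sum_div, hwst.2]
    rw [hval2] at hle
    exact hle
  exact ⟨ycl, hclique, by rw [hval]; exact hfrac⟩

end Aux

section Prod

open Finset

variable {V₁ V₂ : Type*} [Fintype V₁] [Fintype V₂]

lemma nfold_disjProd_le (Γ₁ : SimpleGraph V₁) (Γ₂ : SimpleGraph V₂) (b₁ b₂ : ℕ) :
    nfoldChromaticNumber (disjProd Γ₁ Γ₂) (b₁ * b₂)
      ≤ nfoldChromaticNumber Γ₁ b₁ * nfoldChromaticNumber Γ₂ b₂ := by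
  obtain ⟨c₁, hc₁⟩ := nfold_spec Γ₁ b₁
  obtain ⟨c₂, hc₂⟩ := nfold_spec Γ₂ b₂
  refine nfold_le _ (fun p => ((c₁ p.1) ×ˢ (c₂ p.2)).image finProdFinEquiv) ⟨?_, ?_⟩
  · intro p
    rw [Finset.card_image_of_injective _ finProdFinEquiv.injective,
      Finset.card_product, hc₁.1, hc₂.1]
  · rintro p q hpq
    rw [Finset.disjoint_left]
    rintro x hx hx'
    simp only [Finset.mem_image, Finset.mem_product] at hx hx'
    obtain ⟨a, ⟨ha1, ha2⟩, rfl⟩ := hx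
    obtain ⟨a', ⟨ha1', ha2'⟩, hEq⟩ := hx'
    have haa : a' = a := finProdFinEquiv.injective hEq
    subst haa
    rcases hpq with h | h
    · exact Finset.disjoint_left.mp (hc₁.2 _ _ h) ha1 ha1'
    · exact Finset.disjoint_left.mp (hc₂.2 _ _ h) ha2 ha2'

lemma fracClique_tensor {Γ₁ : SimpleGraph V₁} {Γ₂ : SimpleGraph V₂} {y₁ : V₁ → ℝ}
    {y₂ : V₂ → ℝ} (h₁ : FracClique Γ₁ y₁) (h₂ : FracClique Γ₂ y₂) :
    FracClique (disjProd Γ₁ Γ₂) (fun p => y₁ p.1 * y₂ p.2) := by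
  constructor
  · intro p; exact mul_nonneg (h₁.1 _) (h₂.1 _)
  · intro s hs
    classical
    have hsub : s ⊆ (s.image Prod.fst) ×ˢ (s.image Prod.snd) := by
      intro p hp
      rw [Finset.mem_product]
      exact ⟨Finset.mem_image_of_mem _ hp, Finset.mem_image_of_mem _ hp⟩
    have hle1 : ∑ p ∈ s, y₁ p.1 * y₂ p.2
        ≤ ∑ p ∈ (s.image Prod.fst) ×ˢ (s.image Prod.snd), y₁ p.1 * y₂ p.2 :=
      Finset.sum_le_sum_of_subset_of_nonneg hsub
        fun p _ _ => mul_nonneg (h₁.1 _) (h₂.1 _)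
    have heq : ∑ p ∈ (s.image Prod.fst) ×ˢ (s.image Prod.snd), y₁ p.1 * y₂ p.2
        = (∑ u ∈ s.image Prod.fst, y₁ u) * (∑ v ∈ s.image Prod.snd, y₂ v) := by
      rw [Finset.sum_product, Finset.sum_mul_sum]
    have hsi1 : IsIndepFinset Γ₁ (s.image Prod.fst) := by
      intro a ha b hb hab
      obtain ⟨p, hp, rfl⟩ := Finset.mem_image.mp ha
      obtain ⟨q, hq, rfl⟩ := Finset.mem_image.mp hb
      exact hs p hp q hq (Or.inl hab)
    have hsi2 : IsIndepFinset Γ₂ (s.image Prod.snd) := by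
      intro a ha b hb hab
      obtain ⟨p, hp, rfl⟩ := Finset.mem_image.mp ha
      obtain ⟨q, hq, rfl⟩ := Finset.mem_image.mp hb
      exact hs p hp q hq (Or.inr hab)
    calc ∑ p ∈ s, y₁ p.1 * y₂ p.2
        ≤ (∑ u ∈ s.image Prod.fst, y₁ u) * (∑ v ∈ s.image Prod.snd, y₂ v) := by
          rw [← heq]; exact hle1
      _ ≤ 1 := mul_le_one₀ (h₁.2 _ hsi1)
          (Finset.sum_nonneg fun v _ => h₂.1 v) (h₂.2 _ hsi2)

end Prod

theorem fracChromaticNumber_disjProd {V₁ V₂ : Type*} [Fintype V₁] [Fintype V₂]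
    (Γ₁ : SimpleGraph V₁) (Γ₂ : SimpleGraph V₂) :
    fracChromaticNumber (disjProd Γ₁ Γ₂) = fracChromaticNumber Γ₁ * fracChromaticNumber Γ₂ := by

  cases isEmpty_or_nonempty V₁ with
  | inl h₁ =>
    rw [frac_isEmpty (disjProd Γ₁ Γ₂), frac_isEmpty Γ₁, zero_mul]
  | inr h₁ =>
    cases isEmpty_or_nonempty V₂ with
    | inl h₂ =>
      rw [frac_isEmpty (disjProd Γ₁ Γ₂), frac_isEmpty Γ₂, mul_zero]
    | inr h₂ =>
      have hf₂pos : (0:ℝ) < fracChromaticNumber Γ₂ :=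
        lt_of_lt_of_le one_pos (one_le_frac Γ₂)
      refine le_antisymm ?_ ?_
      · -- upper bound
        have key : ∀ b₁ b₂ : ℕ+, fracChromaticNumber (disjProd Γ₁ Γ₂)
            ≤ ((nfoldChromaticNumber Γ₁ b₁ : ℝ) / b₁)
              * ((nfoldChromaticNumber Γ₂ b₂ : ℝ) / b₂) := by
          intro b₁ b₂
          have h := frac_le_nfold (disjProd Γ₁ Γ₂) (b₁ * b₂)
          have h2 := nfold_disjProd_le Γ₁ Γ₂ b₁ b₂
          have hb₁ : (0:ℝ) < (b₁ : ℝ) := by positivity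
          have hb₂ : (0:ℝ) < (b₂ : ℝ) := by positivity
          have hcast : (((b₁ * b₂ : ℕ+) : ℕ) : ℝ) = (b₁ : ℝ) * (b₂ : ℝ) := by
            push_cast
            norm_num
          calc fracChromaticNumber (disjProd Γ₁ Γ₂)
              ≤ (nfoldChromaticNumber (disjProd Γ₁ Γ₂) (b₁ * b₂ : ℕ+) : ℝ)
                / ((b₁ * b₂ : ℕ+) : ℕ) := h
            _ ≤ ((nfoldChromaticNumber Γ₁ b₁ * nfoldChromaticNumber Γ₂ b₂ : ℕ) : ℝ)
                / ((b₁ * b₂ : ℕ+) : ℕ) := by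
                gcongr
                exact_mod_cast Nat.cast_le.mpr h2
            _ = ((nfoldChromaticNumber Γ₁ b₁ : ℝ) / b₁)
                * ((nfoldChromaticNumber Γ₂ b₂ : ℝ) / b₂) := by
                rw [hcast]
                push_cast
                field_simp
        have step1 : ∀ b₁ : ℕ+, fracChromaticNumber (disjProd Γ₁ Γ₂)
            ≤ ((nfoldChromaticNumber Γ₁ b₁ : ℝ) / b₁) * fracChromaticNumber Γ₂ := by
          intro b₁
          have hF : (0:ℝ) < (nfoldChromaticNumber Γ₁ b₁ : ℝ) / b₁ := by
            have h1 : (1:ℝ) ≤ (nfoldChromaticNumber Γ₁ b₁ : ℝ) / b₁ := by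
              rw [le_div_iff₀ (by positivity), one_mul]
              exact_mod_cast pnat_le_nfold Γ₁ b₁
            linarith
          rw [← div_le_iff₀' hF]
          refine le_frac Γ₂ fun b₂ => ?_
          rw [div_le_iff₀' hF]
          exact key b₁ b₂
        rw [← div_le_iff₀ hf₂pos]
        refine le_frac Γ₁ fun b₁ => ?_
        rw [div_le_iff₀ hf₂pos]
        exact step1 b₁
      · -- lower bound
        obtain ⟨y₁, hy₁, hv₁⟩ := exists_optimal_fracClique Γ₁
        obtain ⟨y₂, hy₂, hv₂⟩ := exists_optimal_fracClique Γ₂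
        have hyt := fracClique_tensor hy₁ hy₂
        have hsum : ∑ p : V₁ × V₂, y₁ p.1 * y₂ p.2 = (∑ v, y₁ v) * (∑ v, y₂ v) := by
          rw [Fintype.sum_prod_type, Finset.sum_mul_sum]
        have hle : fracChromaticNumber Γ₁ * fracChromaticNumber Γ₂
            ≤ ∑ p : V₁ × V₂, y₁ p.1 * y₂ p.2 := by
          rw [hsum]
          exact mul_le_mul hv₁ hv₂ (frac_nonneg Γ₂) ((frac_nonneg Γ₁).trans hv₁)
        refine hle.trans (le_frac _ fun b => ?_)
        obtain ⟨c, hc⟩ := nfold_spec (disjProd Γ₁ Γ₂) b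
        have hwd := fracClique_sum_le (disjProd Γ₁ Γ₂) hc hyt
        rw [le_div_iff₀ (by positivity : (0:ℝ) < ((b:ℕ):ℝ))]
        linarith
end

section
/- Independence-number monotonicity for confusion graphs: if s ≤ t componentwise with s_j + k = t_j for one coordinate j and s_i = t_i otherwise, then α(Γ_t(G)) ≤ 2^k · α(Γ_s(G)). -/
theorem confusionGraph_indepNum_le (n : ℕ) (E : Fin n → Fin n → Prop)
    (s t : Fin n → ℕ) (j : Fin n) (k : ℕ)
    (hj : s j + k = t j) (hne : ∀ i, i ≠ j → s i = t i) :
    indepNum (confusionGraph n E t) ≤ 2 ^ k * indepNum (confusionGraph n E s) := by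
  classical
  have hle : ∀ i, s i ≤ t i := by
    intro i
    by_cases hi : i = j
    · subst hi; omega
    · exact (hne i hi).le
  set π : ((i : Fin n) → Fin (t i) → Bool) → ((i : Fin n) → Fin (s i) → Bool) :=
    fun x i a => x i (Fin.castLE (hle i) a) with hπ
  set ex : ((i : Fin n) → Fin (t i) → Bool) → (Fin k → Bool) :=
    fun x m => x j ⟨s j + m.val, hj ▸ Nat.add_lt_add_left m.isLt (s j)⟩ with hex
  -- coordinatewise reconstruction
  have hcoordj : ∀ x z, π x j = π z j → ex x = ex z → x j = z j := by
    intro x z h1 h2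
    funext a
    rcases lt_or_ge a.val (s j) with ha | ha
    · have hc : Fin.castLE (hle j) ⟨a.val, ha⟩ = a := Fin.ext rfl
      have := congrFun h1 ⟨a.val, ha⟩
      simpa [π, hc] using this
    · have hm : a.val - s j < k := by omega
      have := congrFun h2 ⟨a.val - s j, hm⟩
      simp only [ex] at this
      have hc : (⟨s j + (a.val - s j), by omega⟩ : Fin (t j)) = a :=
        Fin.ext (show s j + (a.val - s j) = a.val by omega)
      rw [hc] at this
      exact this
  have hcoord : ∀ x z (i : Fin n), π x i = π z i → (i = j → ex x = ex z) → x i = z i := by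
    intro x z i h1 h2
    by_cases hi : i = j
    · rw [hi]; exact hcoordj x z (hi ▸ h1) (h2 hi)
    · funext a
      have ha : a.val < s i := by rw [hne i hi]; exact a.isLt
      have hc : Fin.castLE (hle i) ⟨a.val, ha⟩ = a := Fin.ext rfl
      have := congrFun h1 ⟨a.val, ha⟩
      simpa [π, hc] using this
  have hinj : ∀ x z, π x = π z → ex x = ex z → x = z := by
    intro x z h1 h2
    funext i
    exact hcoord x z i (congrFun h1 i) (fun _ => h2)
  -- bound the independence number set
  have hbdd : BddAbove {m | ∃ S : Finset ((i : Fin n) → Fin (s i) → Bool),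
      S.card = m ∧ IsIndepFinset (confusionGraph n E s) S} := by
    refine ⟨Fintype.card ((i : Fin n) → Fin (s i) → Bool), ?_⟩
    rintro m ⟨S, rfl, -⟩
    exact Finset.card_le_univ S
  refine csSup_le ⟨0, ∅, by simp, fun u hu => by simp at hu⟩ ?_
  rintro m ⟨S, rfl, hS⟩
  -- fiberwise decomposition
  have hsum : S.card = ∑ e : Fin k → Bool, (S.filter (fun x => ex x = e)).card :=
    Finset.card_eq_sum_card_fiberwise (fun x _ => Finset.mem_univ (ex x))
  have hfiber : ∀ e : Fin k → Bool,
      (S.filter (fun x => ex x = e)).card ≤ indepNum (confusionGraph n E s) := by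
    intro e
    set Se := S.filter (fun x => ex x = e) with hSe
    have hinjOn : Set.InjOn π Se := by
      intro x hx z hz hxz
      simp only [hSe, Finset.coe_filter, Set.mem_setOf_eq] at hx hz
      exact hinj x z hxz (hx.2.trans hz.2.symm)
    have hcard : (Se.image π).card = Se.card := Finset.card_image_of_injOn hinjOn
    have hindep : IsIndepFinset (confusionGraph n E s) (Se.image π) := by
      intro u hu v hv hadj
      obtain ⟨x, hx, rfl⟩ := Finset.mem_image.mp hu
      obtain ⟨z, hz, rfl⟩ := Finset.mem_image.mp hv
      simp only [hSe, Finset.mem_filter] at hx hz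
      obtain ⟨j', hj', hagree⟩ := hadj
      refine hS x hx.1 z hz.1 ⟨j', ?_, ?_⟩
      · intro h
        exact hj' (by rw [hπ]; simp only; rw [h])
      · intro i hi
        exact hcoord x z i (hagree i hi) (fun _ => hx.2.trans hz.2.symm)
    refine hcard ▸ le_csSup hbdd ⟨Se.image π, rfl, hindep⟩
  calc S.card = ∑ e : Fin k → Bool, (S.filter (fun x => ex x = e)).card := hsum
    _ ≤ ∑ _e : Fin k → Bool, indepNum (confusionGraph n E s) :=
        Finset.sum_le_sum (fun e _ => hfiber e)
    _ = 2 ^ k * indepNum (confusionGraph n E s) := by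
        simp [Finset.sum_const, Finset.card_univ, mul_comm]
end

section
/- A rate tuple (R'₁,…,R'_n) is achievable for the locally recoverable distributed storage problem on directed graph G if and only if there exists a nonnegative integer tuple t = (t₁,…,t_n) such that R'_j ≥ t_j / ⌊log₂ α(Γ_t(G))⌋ for all j ∈ [n]. -/
/-- A `(t₁, …, t_n, r)` distributed storage code exists for the directed graph on
`[n]` with edge relation `E`: an injective encoder of `2^r` messages into server
contents, together with recovery functions, one per server, each depending only on
the contents of the in-neighborhood and recovering the content of that server on
every codeword. -/
def StorageCodeExists (n : ℕ) (E : Fin n → Fin n → Prop) (t : Fin n → ℕ) (r : ℕ) : Prop :=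
  ∃ enc : Fin (2 ^ r) → ((i : Fin n) → Fin (t i) → Bool),
    Function.Injective enc ∧
    ∃ f : ∀ j : Fin n, ((i : Fin n) → Fin (t i) → Bool) → (Fin (t j) → Bool),
      (∀ j x y, (∀ i, E i j → x i = y i) → f j x = f j y) ∧
      (∀ m j, f j (enc m) = enc m j)

/-- A rate tuple is achievable for the distributed storage problem `G`. -/
def DSAchievable (n : ℕ) (E : Fin n → Fin n → Prop) (R : Fin n → ℝ) : Prop :=
  ∃ (t : Fin n → ℕ) (r : ℕ), 0 < r ∧ StorageCodeExists n E t r ∧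
    ∀ j, (t j : ℝ) / (r : ℝ) ≤ R j

theorem dsAchievable_iff (n : ℕ) (E : Fin n → Fin n → Prop) (R : Fin n → ℝ) :
    DSAchievable n E R ↔
      ∃ t : Fin n → ℕ, 0 < Nat.log 2 (indepNum (confusionGraph n E t)) ∧
        ∀ j, (t j : ℝ) / (Nat.log 2 (indepNum (confusionGraph n E t)) : ℝ) ≤ R j := by
  classical
  constructor
  · rintro ⟨t, r, hr, ⟨enc, hinj, f, hdep, hcorr⟩, hR⟩
    have hindep : IsIndepFinset (confusionGraph n E t) (Finset.univ.image enc) := by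
      rintro u hu v hv ⟨j, hne, hagree⟩
      simp only [Finset.mem_image, Finset.mem_univ, true_and] at hu hv
      obtain ⟨a, rfl⟩ := hu; obtain ⟨b, rfl⟩ := hv
      exact hne (by rw [← hcorr a j, ← hcorr b j, hdep j _ _ hagree])
    have hcard : (Finset.univ.image enc).card = 2 ^ r := by
      rw [Finset.card_image_of_injective _ hinj, Finset.card_univ, Fintype.card_fin]
    have hbdd : BddAbove {k | ∃ s : Finset _, s.card = k ∧
        IsIndepFinset (confusionGraph n E t) s} :=
      ⟨Fintype.card _, by rintro k ⟨s, rfl, -⟩; exact Finset.card_le_univ s⟩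
    have hle : 2 ^ r ≤ indepNum (confusionGraph n E t) :=
      le_csSup hbdd ⟨_, hcard, hindep⟩
    have hrle : r ≤ Nat.log 2 (indepNum (confusionGraph n E t)) := by
      calc r = Nat.log 2 (2 ^ r) := (Nat.log_pow one_lt_two r).symm
        _ ≤ _ := Nat.log_mono_right hle
    refine ⟨t, lt_of_lt_of_le hr hrle, fun j => le_trans ?_ (hR j)⟩
    have hr' : (0 : ℝ) < (r : ℝ) := by exact_mod_cast hr
    have hrle' : (r : ℝ) ≤ (Nat.log 2 (indepNum (confusionGraph n E t)) : ℝ) := by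
      exact_mod_cast hrle
    gcongr
  · rintro ⟨t, hL, hR⟩
    set L := Nat.log 2 (indepNum (confusionGraph n E t)) with hLdef
    have hαpos : 0 < indepNum (confusionGraph n E t) := by
      by_contra h
      push_neg at h
      interval_cases h' : indepNum (confusionGraph n E t)
      simp [hLdef, h'] at hL
    have hα : 2 ^ L ≤ indepNum (confusionGraph n E t) :=
      Nat.pow_log_le_self 2 hαpos.ne'
    have hbdd : BddAbove {k | ∃ s : Finset _, s.card = k ∧
        IsIndepFinset (confusionGraph n E t) s} :=
      ⟨Fintype.card _, by rintro k ⟨s, rfl, -⟩; exact Finset.card_le_univ s⟩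
    have hmem : indepNum (confusionGraph n E t) ∈ {k | ∃ s : Finset _, s.card = k ∧
        IsIndepFinset (confusionGraph n E t) s} :=
      Nat.sSup_mem ⟨0, ∅, by simp, by simp [IsIndepFinset]⟩ hbdd
    obtain ⟨s, hscard, hsind⟩ := hmem
    have hcard : Fintype.card (Fin (2 ^ L)) ≤ Fintype.card {x // x ∈ s} := by
      rw [Fintype.card_coe, Fintype.card_fin, hscard]; exact hα
    obtain ⟨e⟩ := Function.Embedding.nonempty_of_card_le hcard
    refine ⟨t, L, hL, ⟨fun m => (e m : (i : Fin n) → Fin (t i) → Bool), ?_, ?_⟩, hR⟩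
    · exact Subtype.val_injective.comp e.injective
    · refine ⟨fun j x =>
        if h : (Finset.univ.filter (fun m : Fin (2 ^ L) =>
            ∀ i, E i j → x i = (e m : (i : Fin n) → Fin (t i) → Bool) i)).Nonempty
        then (e ((Finset.univ.filter _).min' h) : (i : Fin n) → Fin (t i) → Bool) j
        else fun _ => false, ?_, ?_⟩
      · intro j x y hxy
        have hS : (Finset.univ.filter (fun m : Fin (2 ^ L) =>
            ∀ i, E i j → x i = (e m : (i : Fin n) → Fin (t i) → Bool) i)) =
            (Finset.univ.filter (fun m : Fin (2 ^ L) =>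
            ∀ i, E i j → y i = (e m : (i : Fin n) → Fin (t i) → Bool) i)) := by
          apply Finset.filter_congr
          intro m _
          constructor
          · intro h i hi; rw [← hxy i hi]; exact h i hi
          · intro h i hi; rw [hxy i hi]; exact h i hi
        simp only [hS]
      · intro m j
        have hmS : m ∈ Finset.univ.filter (fun m' : Fin (2 ^ L) =>
            ∀ i, E i j → (e m : (i : Fin n) → Fin (t i) → Bool) i =
              (e m' : (i : Fin n) → Fin (t i) → Bool) i) := by
          simp
        have hne : (Finset.univ.filter (fun m' : Fin (2 ^ L) =>
            ∀ i, E i j → (e m : (i : Fin n) → Fin (t i) → Bool) i =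
              (e m' : (i : Fin n) → Fin (t i) → Bool) i)).Nonempty := ⟨m, hmS⟩
        simp only [dif_pos hne]
        set m' := (Finset.univ.filter _).min' hne with hm'
        have hm'S := (Finset.univ.filter _).min'_mem hne
        rw [Finset.mem_filter] at hm'S
        by_contra hnej
        exact hsind _ (e m).2 _ (e m').2
          ⟨j, fun h => hnej h.symm, fun i hi => hm'S.2 i hi⟩
end

section
/- For a guessing game on a directed graph G on n nodes with alphabet sizes 2^{t_i}, the maximum over all strategies of the winning probability equals α(Γ_t(G)) / 2^{∑_i t_i}, where α is the independence number of the confusion graph. -/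
theorem guessing_game_max_winning_prob (n : ℕ) (E : Fin n → Fin n → Prop)
    (t : Fin n → ℕ) :
    IsGreatest
      {p : ℝ | ∃ h : ∀ j : Fin n, ((i : Fin n) → Fin (t i) → Bool) → (Fin (t j) → Bool),
        (∀ j x y, (∀ i, E i j → x i = y i) → h j x = h j y) ∧
        p = (Nat.card {x : (i : Fin n) → Fin (t i) → Bool // ∀ j, h j x = x j} : ℝ)
              / 2 ^ (∑ i, t i)}
      ((indepNum (confusionGraph n E t) : ℝ) / 2 ^ (∑ i, t i)) := by
  classical
  set V := (i : Fin n) → Fin (t i) → Bool with hV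
  set Γ := confusionGraph n E t with hΓ
  -- the set of achievable independent-set sizes
  have hbdd : BddAbove {k | ∃ s : Finset V, s.card = k ∧ IsIndepFinset Γ s} := by
    refine ⟨Fintype.card V, ?_⟩
    rintro k ⟨s, rfl, -⟩
    exact Finset.card_le_card (Finset.subset_univ s) |>.trans (by simp)
  have hne : {k | ∃ s : Finset V, s.card = k ∧ IsIndepFinset Γ s}.Nonempty :=
    ⟨0, ∅, by simp, by intro u hu; simp at hu⟩
  -- winning sets of adapted strategies are independent
  have hWindep : ∀ (h : ∀ j : Fin n, V → (Fin (t j) → Bool)),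
      (∀ j x y, (∀ i, E i j → x i = y i) → h j x = h j y) →
      IsIndepFinset Γ (Finset.univ.filter fun x => ∀ j, h j x = x j) := by
    intro h hadapt u hu v hv hadj
    obtain ⟨j, hj, hagree⟩ := hadj
    simp only [Finset.mem_filter, Finset.mem_univ, true_and] at hu hv
    exact hj (by rw [← hu j, hadapt j u v hagree, hv j])
  -- card of winning set as a filter card
  have hcard : ∀ (h : ∀ j : Fin n, V → (Fin (t j) → Bool)),
      Nat.card {x : V // ∀ j, h j x = x j}
        = (Finset.univ.filter fun x : V => ∀ j, h j x = x j).card := by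
    intro h
    rw [Nat.card_eq_fintype_card, Fintype.card_subtype]
  -- upper bound on winning set card
  have hub : ∀ (h : ∀ j : Fin n, V → (Fin (t j) → Bool)),
      (∀ j x y, (∀ i, E i j → x i = y i) → h j x = h j y) →
      Nat.card {x : V // ∀ j, h j x = x j} ≤ indepNum Γ := by
    intro h hadapt
    rw [hcard h]
    exact le_csSup hbdd ⟨_, rfl, hWindep h hadapt⟩
  -- extract a maximum independent set
  obtain ⟨S, hScard, hSindep⟩ :
      ∃ s : Finset V, s.card = indepNum Γ ∧ IsIndepFinset Γ s :=
    Nat.sSup_mem hne hbdd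
  -- the predicate: v is the j-th block of some element of S agreeing with x on A_j
  set P : (j : Fin n) → V → (Fin (t j) → Bool) → Prop :=
    fun j x v => ∃ s ∈ S, (∀ i, E i j → s i = x i) ∧ s j = v with hP
  have hPuniq : ∀ j x v v', P j x v → P j x v' → v = v' := by
    rintro j x v v' ⟨s, hs, hag, rfl⟩ ⟨s', hs', hag', rfl⟩
    by_contra hne'
    exact hSindep s hs s' hs' ⟨j, hne', fun i hi => (hag i hi).trans (hag' i hi).symm⟩
  set h : ∀ j : Fin n, V → (Fin (t j) → Bool) :=
    fun j x => if hv : ∃ v, P j x v then hv.choose else (fun _ => false) with hh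
  have hadapt : ∀ j x y, (∀ i, E i j → x i = y i) → h j x = h j y := by
    intro j x y hxy
    have hPeq : P j x = P j y := by
      funext v
      apply propext
      constructor
      · rintro ⟨s, hs, hag, rfl⟩
        exact ⟨s, hs, fun i hi => (hag i hi).trans (hxy i hi), rfl⟩
      · rintro ⟨s, hs, hag, rfl⟩
        exact ⟨s, hs, fun i hi => (hag i hi).trans (hxy i hi).symm, rfl⟩
    by_cases hex : ∃ v, P j x v
    · have hey : ∃ v, P j y v := by rw [← hPeq]; exact hex
      simp only [hh, dif_pos hex, dif_pos hey]
      exact hPuniq j x _ _ hex.choose_spec (by rw [hPeq]; exact hey.choose_spec)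
    · have hey : ¬ ∃ v, P j y v := by rw [← hPeq]; exact hex
      simp only [hh, dif_neg hex, dif_neg hey]
  have hSwin : ∀ s ∈ S, ∀ j, h j s = s j := by
    intro s hs j
    have hex : ∃ v, P j s v := ⟨s j, s, hs, fun i _ => rfl, rfl⟩
    simp only [hh, dif_pos hex]
    exact hPuniq j s _ _ hex.choose_spec ⟨s, hs, fun i _ => rfl, rfl⟩
  -- the winning set of h has card exactly indepNum
  have hWcard : Nat.card {x : V // ∀ j, h j x = x j} = indepNum Γ := by
    refine le_antisymm (hub h hadapt) ?_
    rw [hcard h, ← hScard]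
    apply Finset.card_le_card
    intro s hs
    simp only [Finset.mem_filter, Finset.mem_univ, true_and]
    exact hSwin s hs
  constructor
  · exact ⟨h, hadapt, by rw [hWcard]⟩
  · rintro p ⟨g, hg, rfl⟩
    have := hub g hg
    gcongr
end

section
/- Complementarity of index coding capacity and distributed storage rate: for any directed graph G on n nodes and any nonnegative rational vector λ, 1/C(λ) = ∑_{i=1}^n λ_i − 1/R(λ), where C(λ) = sup over r with rλ integral of r / log₂ χ_f(Γ_{rλ}(G)) and R(λ) = inf over r with rλ integral of r / log₂ α(Γ_{rλ}(G)). -/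
/-! ### Auxiliary lemmas about the independence number -/

section Indep
variable {V : Type*} [Fintype V] (Γ : SimpleGraph V)

lemma indep_bddAbove : BddAbove {k | ∃ s : Finset V, s.card = k ∧ IsIndepFinset Γ s} := by
  refine ⟨Fintype.card V, ?_⟩
  rintro k ⟨s, rfl, -⟩
  exact Finset.card_le_univ s

lemma indep_nonempty : {k | ∃ s : Finset V, s.card = k ∧ IsIndepFinset Γ s}.Nonempty :=
  ⟨0, ∅, Finset.card_empty, by intro u hu; simp at hu⟩

lemma exists_max_indep : ∃ s : Finset V, s.card = indepNum Γ ∧ IsIndepFinset Γ s :=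
  Nat.sSup_mem (indep_nonempty Γ) (indep_bddAbove Γ)

lemma card_le_indepNum {s : Finset V} (hs : IsIndepFinset Γ s) : s.card ≤ indepNum Γ :=
  le_csSup (indep_bddAbove Γ) ⟨s, rfl, hs⟩

lemma one_le_indepNum [Nonempty V] : 1 ≤ indepNum Γ := by
  have := card_le_indepNum Γ (s := {Classical.arbitrary V}) ?_
  · simpa using this
  · intro u hu v hv
    simp only [Finset.mem_singleton] at hu hv
    subst hu; subst hv; exact Γ.loopless.irrefl _

lemma indepNum_le_card : indepNum Γ ≤ Fintype.card V := by
  obtain ⟨s, hs, -⟩ := exists_max_indep Γ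
  exact hs ▸ Finset.card_le_univ s

lemma indepNum_lt_card (h : ∃ u v, Γ.Adj u v) : indepNum Γ < Fintype.card V := by
  obtain ⟨s, hs, hind⟩ := exists_max_indep Γ
  obtain ⟨u, v, huv⟩ := h
  have hne : s ≠ Finset.univ := by
    rintro rfl
    exact hind u (Finset.mem_univ u) v (Finset.mem_univ v) huv
  have : s ⊂ Finset.univ :=
    ⟨Finset.subset_univ s, fun h => hne (Finset.eq_univ_iff_forall.mpr fun x => h (Finset.mem_univ x))⟩
  calc indepNum Γ = s.card := hs.symm
    _ < Finset.univ.card := Finset.card_lt_card this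
    _ = Fintype.card V := Finset.card_univ

lemma indepNum_eq_card_of_no_adj (h : ∀ u v : V, ¬ Γ.Adj u v) :
    indepNum Γ = Fintype.card V := by
  refine le_antisymm (indepNum_le_card Γ) ?_
  have := card_le_indepNum Γ (s := Finset.univ) (fun u _ v _ => h u v)
  simpa using this

end Indep

/-! ### Counting bounds for `b`-fold colorings -/

open Finset in
lemma nfold_count {V : Type*} [Fintype V] (Γ : SimpleGraph V) {b k : ℕ}
    {c : V → Finset (Fin k)} (hc : IsNFoldColoring Γ b k c) :
    b * Fintype.card V ≤ k * indepNum Γ := by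
  classical
  have key : ∑ v : V, (c v).card = ∑ g : Fin k, (univ.filter fun v => g ∈ c v).card := by
    simp only [card_filter]
    rw [Finset.sum_comm]
    congr 1
    funext v
    rw [Finset.card_eq_sum_ones]
    rw [Finset.sum_ite_mem]
    simp [Finset.univ_inter]
  have h1 : ∑ v : V, (c v).card = b * Fintype.card V := by
    simp [hc.1, Finset.sum_const, Finset.card_univ, mul_comm]
  have h2 : ∀ g : Fin k, (univ.filter fun v => g ∈ c v).card ≤ indepNum Γ := by
    intro g
    apply card_le_indepNum Γ
    intro u hu v hv hadj
    simp only [mem_filter] at hu hv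
    exact (Finset.disjoint_left.mp (hc.2 u v hadj) hu.2) hv.2
  calc b * Fintype.card V = ∑ g : Fin k, (univ.filter fun v => g ∈ c v).card := h1 ▸ key
    _ ≤ ∑ _g : Fin k, indepNum Γ := Finset.sum_le_sum fun g _ => h2 g
    _ = k * indepNum Γ := by simp [mul_comm]

lemma nfold_trivial {V : Type*} [Fintype V] (Γ : SimpleGraph V) (b : ℕ) :
    ∃ c, IsNFoldColoring Γ b (b * Fintype.card V) c := by
  classical
  set e := Fintype.equivFin V
  refine ⟨fun v => (Finset.univ : Finset (Fin b)).image (fun i => finProdFinEquiv (i, e v)), ?_, ?_⟩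
  · intro v
    rw [Finset.card_image_of_injective _ (fun i i' h => ?_), Finset.card_univ, Fintype.card_fin]
    have := finProdFinEquiv.injective h
    exact (Prod.mk.injEq _ _ _ _).mp this |>.1
  · intro u v hadj
    rw [Finset.disjoint_left]
    rintro g hg hg'
    simp only [Finset.mem_image, Finset.mem_univ, true_and] at hg hg'
    obtain ⟨i, rfl⟩ := hg
    obtain ⟨i', h⟩ := hg'
    have := finProdFinEquiv.injective h
    have : v = u := e.injective ((Prod.mk.injEq _ _ _ _).mp this |>.2)
    exact hadj.ne this.symm

lemma chrom_lb {V : Type*} [Fintype V] (Γ : SimpleGraph V) (b : ℕ) :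
    b * Fintype.card V ≤ nfoldChromaticNumber Γ b * indepNum Γ := by
  have hmem : nfoldChromaticNumber Γ b ∈
      {k | ∃ c : V → Finset (Fin k), IsNFoldColoring Γ b k c} :=
    Nat.sInf_mem ⟨b * Fintype.card V, nfold_trivial Γ b⟩
  obtain ⟨c, hc⟩ := hmem
  exact nfold_count Γ hc

/-! ### The confusion graph: xor translations and the fractional chromatic number -/

section Conf
variable {n : ℕ} (E : Fin n → Fin n → Prop)

abbrev ConfV (t : Fin n → ℕ) := (i : Fin n) → Fin (t i) → Bool

def vxor {t : Fin n → ℕ} (x y : ConfV t) : ConfV t := fun i b => xor (x i b) (y i b)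

lemma vxor_left_cancel {t : Fin n → ℕ} (x y : ConfV t) : vxor x (vxor x y) = y := by
  funext i b
  simp [vxor]

lemma vxor_comp_eq_iff {t : Fin n → ℕ} (x z w : ConfV t) (i : Fin n) :
    vxor x w i = vxor z w i ↔ x i = z i := by
  constructor
  · intro h
    funext b
    have := congrFun h b
    simp only [vxor] at this
    revert this
    cases x i b <;> cases z i b <;> cases w i b <;> decide
  · intro h
    funext b
    simp [vxor, congrFun h b]

lemma adj_vxor {t : Fin n → ℕ} (x z w : ConfV t) :
    (confusionGraph n E t).Adj (vxor x w) (vxor z w) ↔ (confusionGraph n E t).Adj x z := by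
  constructor <;> rintro ⟨j, hj, h⟩ <;> refine ⟨j, ?_, ?_⟩
  · exact fun he => hj (by rw [vxor_comp_eq_iff]; exact he)
  · intro i hi
    have := h i hi
    rwa [vxor_comp_eq_iff] at this
  · exact fun he => hj ((vxor_comp_eq_iff x z w j).mp he)
  · intro i hi
    rw [vxor_comp_eq_iff]
    exact h i hi

lemma chrom_ub (t : Fin n → ℕ) :
    nfoldChromaticNumber (confusionGraph n E t) (indepNum (confusionGraph n E t))
      ≤ Fintype.card (ConfV t) := by
  classical
  set Γ := confusionGraph n E t
  obtain ⟨S, hScard, hSind⟩ := exists_max_indep Γ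
  set N := Fintype.card (ConfV t)
  set e : ConfV t ≃ Fin N := Fintype.equivFin (ConfV t)
  apply Nat.sInf_le
  refine ⟨fun v => S.image (fun s => e (vxor v s)), ?_, ?_⟩
  · intro v
    rw [Finset.card_image_of_injective, hScard]
    intro s s' h
    have h2 := e.injective h
    have := congrArg (vxor v) h2
    rwa [vxor_left_cancel, vxor_left_cancel] at this
  · intro u v hadj
    rw [Finset.disjoint_left]
    rintro g hg hg'
    simp only [Finset.mem_image] at hg hg'
    obtain ⟨s, hs, rfl⟩ := hg
    obtain ⟨s', hs', h⟩ := hg'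
    have h2 : vxor v s' = vxor u s := e.injective h
    set p := vxor u s with hp
    have hsu : s = vxor u p := by rw [hp, vxor_left_cancel]
    have hs'v : s' = vxor v p := by rw [← h2, vxor_left_cancel]
    have hxz : Γ.Adj (vxor u p) (vxor v p) := (adj_vxor E u v p).mpr hadj
    rw [← hsu, ← hs'v] at hxz
    exact hSind s hs s' hs' hxz

lemma card_confV (t : Fin n → ℕ) : Fintype.card (ConfV t) = 2 ^ (∑ i, t i) := by
  rw [Fintype.card_pi]
  have : ∀ i : Fin n, Fintype.card (Fin (t i) → Bool) = 2 ^ (t i) := by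
    intro i; rw [Fintype.card_fun]; simp
  rw [Finset.prod_congr rfl (fun i _ => this i), ← Finset.prod_pow_eq_pow_sum]

end Conf

lemma fracChrom_eq_of_ub {V : Type*} [Fintype V] [Nonempty V] (Γ : SimpleGraph V)
    (hub : nfoldChromaticNumber Γ (indepNum Γ) ≤ Fintype.card V) :
    fracChromaticNumber Γ = (Fintype.card V : ℝ) / (indepNum Γ : ℝ) := by
  have ha : 0 < indepNum Γ := one_le_indepNum Γ
  have haR : (0:ℝ) < (indepNum Γ : ℝ) := by exact_mod_cast ha
  have hbdd : BddBelow (Set.range fun b : ℕ+ => (nfoldChromaticNumber Γ b : ℝ) / (b : ℝ)) := by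
    refine ⟨0, ?_⟩
    rintro x ⟨b, rfl⟩
    positivity
  apply le_antisymm
  · calc fracChromaticNumber Γ
        ≤ (nfoldChromaticNumber Γ (⟨indepNum Γ, ha⟩ : ℕ+) : ℝ) / ((⟨indepNum Γ, ha⟩ : ℕ+) : ℝ) :=
          ciInf_le hbdd _
      _ ≤ (Fintype.card V : ℝ) / (indepNum Γ : ℝ) := by
          have hcoe : ((⟨indepNum Γ, ha⟩ : ℕ+) : ℝ) = (indepNum Γ : ℝ) := rfl
          rw [hcoe]
          gcongr
  · apply le_ciInf
    intro b
    rw [div_le_div_iff₀ haR (by exact_mod_cast b.pos)]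
    have := chrom_lb Γ b
    calc (Fintype.card V : ℝ) * (b : ℝ) = ((b * Fintype.card V : ℕ) : ℝ) := by push_cast; ring
      _ ≤ ((nfoldChromaticNumber Γ b * indepNum Γ : ℕ) : ℝ) := by exact_mod_cast this
      _ = (nfoldChromaticNumber Γ b : ℝ) * (indepNum Γ : ℝ) := by push_cast; ring

/-! ### logb facts -/

lemma logb_two_pow (T : ℕ) : Real.logb 2 (((2:ℕ) ^ T : ℕ) : ℝ) = T := by
  push_cast
  rw [Real.logb_pow]
  simp [Real.logb_self_eq_one]

lemma one_le_logb {a : ℕ} (h : 2 ≤ a) : 1 ≤ Real.logb 2 a := by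
  have h2 : (2:ℝ) ≤ (a:ℝ) := by exact_mod_cast h
  have := Real.logb_le_logb_of_le (b := 2) (x := 2) (y := (a:ℝ)) (by norm_num) (by norm_num) h2
  simpa [Real.logb_self_eq_one] using this

lemma logb_lt_logb_nat {a N : ℕ} (h0 : 0 < a) (h : a < N) :
    Real.logb 2 a < Real.logb 2 N :=
  Real.logb_lt_logb (by norm_num) (by exact_mod_cast h0) (by exact_mod_cast h)

lemma logb_frac_eq {n : ℕ} (E : Fin n → Fin n → Prop) (t : Fin n → ℕ) :
    Real.logb 2 (fracChromaticNumber (confusionGraph n E t)) =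
      ((∑ i, t i : ℕ) : ℝ) - Real.logb 2 (indepNum (confusionGraph n E t)) := by
  have hub := chrom_ub E t
  rw [fracChrom_eq_of_ub _ hub, card_confV]
  have ha : 1 ≤ indepNum (confusionGraph n E t) := one_le_indepNum _
  have haR : ((indepNum (confusionGraph n E t) : ℝ)) ≠ 0 := by
    have : (0:ℝ) < indepNum (confusionGraph n E t) := by exact_mod_cast ha
    exact this.ne'
  rw [Real.logb_div (by positivity) haR]
  congr 1
  exact logb_two_pow _

/-! ### Rat facts -/

lemma den_one_of_dvd {q : ℚ} {r : ℕ} (h : q.den ∣ r) : ((r : ℚ) * q).den = 1 := by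
  obtain ⟨c, hc⟩ := h
  have hden : (q.den : ℚ) ≠ 0 := by exact_mod_cast q.den_nz
  have h3 : (q.den : ℚ) * q = (q.num : ℚ) := by
    rw [mul_comm]
    exact Rat.mul_den_eq_num q
  have hq : (r : ℚ) * q = ((c * q.num : ℤ) : ℚ) := by
    have hr : ((r:ℕ):ℚ) = (q.den:ℚ) * c := by exact_mod_cast hc
    rw [hr, mul_comm (q.den:ℚ) (c:ℚ), mul_assoc, h3]
    push_cast
    ring
  rw [hq, Rat.den_intCast]

lemma toNat_cast_eq {q : ℚ} (hq : 0 ≤ q) (hden : q.den = 1) : ((q.num.toNat : ℚ)) = q := by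
  have h1 : (0:ℤ) ≤ q.num := Rat.num_nonneg.mpr hq
  have h2 : (q.num.toNat : ℤ) = q.num := Int.toNat_of_nonneg h1
  have h3 : ((q.num.toNat : ℚ)) = ((q.num : ℤ) : ℚ) := by
    exact_mod_cast congrArg (fun z : ℤ => (z:ℚ)) h2
  rw [h3]
  conv_rhs => rw [← Rat.num_div_den q]
  rw [hden]
  simp

lemma toNat_pos_iff (q : ℚ) : 0 < q.num.toNat ↔ 0 < q := by
  rw [Int.lt_toNat]
  simp only [Nat.cast_zero]
  exact Rat.num_pos

/-! ### Characterizations of edges and independent pairs in confusion graphs -/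

section Char
variable {n : ℕ} {E : Fin n → Fin n → Prop} {t : Fin n → ℕ}

lemma exists_adj_iff :
    (∃ x z, (confusionGraph n E t).Adj x z) ↔ ∃ j, 0 < t j ∧ ¬ E j j := by
  classical
  constructor
  · rintro ⟨x, z, j, hj, h⟩
    refine ⟨j, ?_, ?_⟩
    · by_contra hle
      push_neg at hle
      apply hj
      funext b
      exact absurd b.2 (by omega)
    · intro hE
      exact hj (h j hE)
  · rintro ⟨j, htj, hE⟩
    refine ⟨(fun i b => false), (fun i b => decide (i = j)), j, ?_, ?_⟩
    · intro h
      have := congrFun h ⟨0, htj⟩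
      simp at this
    · intro i hi
      have : i ≠ j := fun h => hE (h ▸ hi)
      funext b
      simp [this]

lemma two_le_indepNum_iff :
    2 ≤ indepNum (confusionGraph n E t) ↔
      ∃ D : Finset (Fin n), D.Nonempty ∧ (∀ j ∈ D, 0 < t j) ∧ ∀ j ∈ D, ∃ i ∈ D, E i j := by
  classical
  constructor
  · intro h2
    obtain ⟨s, hcard, hind⟩ := exists_max_indep (confusionGraph n E t)
    obtain ⟨x, hx, z, hz, hxz⟩ := Finset.one_lt_card.mp (show 1 < s.card by omega)
    refine ⟨Finset.univ.filter (fun j => x j ≠ z j), ?_, ?_, ?_⟩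
    · obtain ⟨j, hj⟩ : ∃ j, x j ≠ z j := by
        by_contra hc; push_neg at hc; exact hxz (funext hc)
      exact ⟨j, by simp [hj]⟩
    · intro j hj
      simp only [Finset.mem_filter] at hj
      by_contra hle
      push_neg at hle
      apply hj.2
      funext b
      exact absurd b.2 (by omega)
    · intro j hj
      simp only [Finset.mem_filter, Finset.mem_univ, true_and] at hj ⊢
      have hnadj := hind x hx z hz
      simp only [confusionGraph, ne_eq] at hnadj
      push_neg at hnadj
      obtain ⟨i, hEi, hne⟩ := hnadj j hj
      exact ⟨i, hne, hEi⟩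
  · rintro ⟨D, ⟨j0, hj0⟩, hpos, hD⟩
    set x : (i : Fin n) → Fin (t i) → Bool := fun i b => false with hxdef
    set z : (i : Fin n) → Fin (t i) → Bool := fun i b => decide (i ∈ D) with hzdef
    have hxz : x ≠ z := by
      intro h
      have := congrFun (congrFun h j0) ⟨0, hpos j0 hj0⟩
      simp [hxdef, hzdef, hj0] at this
    have hkey : ∀ i, x i ≠ z i → i ∈ D := by
      intro i hi
      by_contra hiD
      apply hi
      funext b
      simp [hxdef, hzdef, hiD]
    have hnadj : ¬ (confusionGraph n E t).Adj x z := by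
      rintro ⟨j, hj, h⟩
      have hjD : j ∈ D := hkey j hj
      obtain ⟨i, hiD, hEij⟩ := hD j hjD
      have := congrFun (h i hEij) ⟨0, hpos i hiD⟩
      simp [hxdef, hzdef, hiD] at this
    have : IsIndepFinset (confusionGraph n E t) {x, z} := by
      intro u hu v hv
      simp only [Finset.mem_insert, Finset.mem_singleton] at hu hv
      rcases hu with rfl | rfl <;> rcases hv with rfl | rfl
      · exact (confusionGraph n E t).loopless.irrefl x
      · exact hnadj
      · exact fun h => hnadj h.symm
      · exact (confusionGraph n E t).loopless.irrefl z
    have hle := card_le_indepNum (confusionGraph n E t) this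
    rwa [Finset.card_insert_of_notMem (by simpa using hxz), Finset.card_singleton] at hle

end Char

/-! ### Algebraic helpers -/

lemma alg_div_eq {r L Lam : ℝ} (hr : 0 < r) :
    r / (r * Lam - L) = 1 / (Lam - L / r) := by
  have h1 : r * Lam - L = r * (Lam - L / r) := by field_simp
  rw [h1, div_mul_eq_div_div, div_self hr.ne']

lemma alg_div_eq' (r L : ℝ) : r / L = 1 / (L / r) := (one_div_div L r).symm

/-! ### The main sSup/sInf computation -/

lemma final_calc (Lam : ℝ) (F : Set ℝ) (hne : F.Nonempty) (h : ∀ y ∈ F, 0 < y ∧ y < Lam) :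
    1 / sSup ((fun y => 1/(Lam - y)) '' F) = Lam - 1 / sInf ((fun y => 1/y) '' F) := by
  obtain ⟨y0, hy0⟩ := hne
  obtain ⟨hy0p, hy0lt⟩ := h y0 hy0
  have hLam : 0 < Lam := hy0p.trans hy0lt
  have hbddF : BddAbove F := ⟨Lam, fun y hy => (h y hy).2.le⟩
  set S := sSup F with hSdef
  have hSle : S ≤ Lam := csSup_le ⟨y0, hy0⟩ fun y hy => (h y hy).2.le
  have hSpos : 0 < S := hy0p.trans_le (le_csSup hbddF hy0)
  set m := sInf ((fun y => 1/y) '' F) with hmdef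
  have hmlb : 1 / S ≤ m := by
    apply le_csInf ((Set.Nonempty.image _ ⟨y0, hy0⟩))
    rintro x ⟨y, hy, rfl⟩
    exact one_div_le_one_div_of_le (h y hy).1 (le_csSup hbddF hy)
  have hmpos : 0 < m := lt_of_lt_of_le (one_div_pos.mpr hSpos) hmlb
  have hmub : m ≤ 1 / S := by
    have hSub : S ≤ 1 / m := by
      apply csSup_le ⟨y0, hy0⟩
      intro y hy
      have h1 : m ≤ 1 / y :=
        csInf_le ⟨0, by rintro x ⟨z, hz, rfl⟩; exact le_of_lt (one_div_pos.mpr (h z hz).1)⟩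
          ⟨y, hy, rfl⟩
      have := one_div_le_one_div_of_le hmpos h1
      rwa [one_div_one_div] at this
    have := one_div_le_one_div_of_le hSpos hSub
    rwa [one_div_one_div] at this
  have hm : m = 1 / S := le_antisymm hmub hmlb
  have hRHS : Lam - 1 / m = Lam - S := by rw [hm, one_div_one_div]
  rw [hRHS]
  rcases eq_or_lt_of_le hSle with hSL | hSL
  · have hnb : ¬ BddAbove ((fun y => 1/(Lam - y)) '' F) := by
      rintro ⟨c, hc⟩
      have hc0 : 0 < c := by
        have h1 : 1/(Lam - y0) ≤ c := hc ⟨y0, hy0, rfl⟩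
        have : 0 < 1/(Lam - y0) := one_div_pos.mpr (by linarith)
        linarith
      have hub : ∀ y ∈ F, y ≤ Lam - 1/c := by
        intro y hy
        obtain ⟨hyp, hylt⟩ := h y hy
        have h1 : 1/(Lam - y) ≤ c := hc ⟨y, hy, rfl⟩
        have h2 := one_div_le_one_div_of_le (one_div_pos.mpr (show (0:ℝ) < Lam - y by linarith)) h1
        rw [one_div_one_div] at h2
        linarith
      have : S ≤ Lam - 1/c := csSup_le ⟨y0, hy0⟩ hub
      have : (0:ℝ) < 1/c := one_div_pos.mpr hc0
      linarith [hSL]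
    rw [Real.sSup_of_not_bddAbove hnb]
    rw [← hSL]
    simp
  · have hub : ∀ x ∈ (fun y => 1/(Lam - y)) '' F, x ≤ 1/(Lam - S) := by
      rintro x ⟨y, hy, rfl⟩
      apply one_div_le_one_div_of_le (by linarith)
      have := le_csSup hbddF hy
      linarith
    have hsup_le : sSup ((fun y => 1/(Lam - y)) '' F) ≤ 1/(Lam - S) :=
      csSup_le (Set.Nonempty.image _ ⟨y0, hy0⟩) hub
    have hle_sup : 1/(Lam - S) ≤ sSup ((fun y => 1/(Lam - y)) '' F) := by
      set c := sSup ((fun y => 1/(Lam - y)) '' F) with hcdef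
      have hbddA : BddAbove ((fun y => 1/(Lam - y)) '' F) := ⟨1/(Lam - S), hub⟩
      have hc0 : 0 < c := by
        have h1 : 1/(Lam - y0) ≤ c := le_csSup hbddA ⟨y0, hy0, rfl⟩
        have : 0 < 1/(Lam - y0) := one_div_pos.mpr (by linarith)
        linarith
      have hubF : ∀ y ∈ F, y ≤ Lam - 1/c := by
        intro y hy
        obtain ⟨hyp, hylt⟩ := h y hy
        have h1 : 1/(Lam - y) ≤ c := le_csSup hbddA ⟨y, hy, rfl⟩
        have h2 := one_div_le_one_div_of_le (one_div_pos.mpr (show (0:ℝ) < Lam - y by linarith)) h1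
        rw [one_div_one_div] at h2
        linarith
      have hS2 : S ≤ Lam - 1/c := csSup_le ⟨y0, hy0⟩ hubF
      have h3 : 1/c ≤ Lam - S := by linarith
      have := one_div_le_one_div_of_le (one_div_pos.mpr hc0) h3
      rwa [one_div_one_div] at this
    rw [le_antisymm hsup_le hle_sup, one_div_one_div]

theorem capacity_storage_complementarity (n : ℕ) (E : Fin n → Fin n → Prop)
    (lam : Fin n → ℚ) (hlam : ∀ i, 0 ≤ lam i) :
    1 / sSup {x : ℝ | ∃ r : ℕ, 0 < r ∧ (∀ i, ((r : ℚ) * lam i).den = 1) ∧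
        x = (r : ℝ) / Real.logb 2 (fracChromaticNumber
              (confusionGraph n E (fun i => ((r : ℚ) * lam i).num.toNat)))}
      = (∑ i, (lam i : ℝ)) -
        1 / sInf {x : ℝ | ∃ r : ℕ, 0 < r ∧ (∀ i, ((r : ℚ) * lam i).den = 1) ∧
            x = (r : ℝ) / Real.logb 2 ((indepNum
              (confusionGraph n E (fun i => ((r : ℚ) * lam i).num.toNat)) : ℝ))} := by
  classical
  set Lam : ℝ := ∑ i, (lam i : ℝ) with hLamdef
  have hLamnn : (0:ℝ) ≤ Lam := Finset.sum_nonneg fun i _ => by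
    have := hlam i
    exact_mod_cast this
  obtain ⟨r0, hr0pos, hr0den⟩ : ∃ r : ℕ, 0 < r ∧ ∀ i, ((r:ℚ) * lam i).den = 1 := by
    refine ⟨∏ i, (lam i).den, Finset.prod_pos fun i _ => (lam i).pos, fun i => ?_⟩
    exact den_one_of_dvd (Finset.dvd_prod_of_mem _ (Finset.mem_univ i))
  have hcast : ∀ r : ℕ, 0 < r → (∀ i, ((r:ℚ) * lam i).den = 1) →
      ∀ i, ((((r:ℚ) * lam i).num.toNat : ℝ)) = (r : ℝ) * (lam i : ℝ) := by
    intro r hr hden i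
    have h1 : ((((r:ℚ) * lam i).num.toNat : ℚ)) = (r:ℚ) * lam i :=
      toNat_cast_eq (mul_nonneg (by positivity) (hlam i)) (hden i)
    have h2 := congrArg (fun q : ℚ => (q : ℝ)) h1
    push_cast at h2
    exact h2
  have hsum : ∀ r : ℕ, 0 < r → (∀ i, ((r:ℚ) * lam i).den = 1) →
      ((∑ i, ((r:ℚ) * lam i).num.toNat : ℕ) : ℝ) = (r : ℝ) * Lam := by
    intro r hr hden
    rw [hLamdef, Finset.mul_sum]
    push_cast
    exact Finset.sum_congr rfl fun i _ => hcast r hr hden i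
  have hsupp : ∀ r : ℕ, 0 < r → ∀ i : Fin n, (0 < ((r:ℚ) * lam i).num.toNat ↔ 0 < lam i) := by
    intro r hr i
    rw [toNat_pos_iff]
    constructor
    · intro h
      rcases lt_or_eq_of_le (hlam i) with h' | h'
      · exact h'
      · rw [← h', mul_zero] at h
        exact absurd h (lt_irrefl 0)
    · intro h
      have hr' : (0:ℚ) < r := by exact_mod_cast hr
      exact mul_pos hr' h
  have keylog : ∀ r : ℕ, 0 < r → (∀ i, ((r:ℚ) * lam i).den = 1) →
      Real.logb 2 (fracChromaticNumber (confusionGraph n E (fun i => ((r:ℚ) * lam i).num.toNat)))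
        = (r:ℝ) * Lam
          - Real.logb 2 ((indepNum (confusionGraph n E
              (fun i => ((r:ℚ) * lam i).num.toNat)) : ℝ)) := by
    intro r hr hden
    rw [logb_frac_eq, hsum r hr hden]
  by_cases hE : ∃ j, 0 < lam j ∧ ¬ E j j
  · -- there are edges
    obtain ⟨j0, hj0pos, hj0E⟩ := hE
    have hLpos : 0 < Lam := by
      have h1 : (0:ℝ) < (lam j0 : ℝ) := by exact_mod_cast hj0pos
      have h2 : (lam j0 : ℝ) ≤ Lam := by
        rw [hLamdef]
        exact Finset.single_le_sum (f := fun i => ((lam i : ℝ))) (fun i _ => by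
          show (0:ℝ) ≤ (lam i : ℝ)
          exact_mod_cast hlam i) (Finset.mem_univ j0)
      linarith
    by_cases hD : ∃ D : Finset (Fin n), D.Nonempty ∧ (∀ j ∈ D, 0 < lam j) ∧
        ∀ j ∈ D, ∃ i ∈ D, E i j
    · -- independence number at least 2 everywhere
      set F : Set ℝ := {y | ∃ r : ℕ, 0 < r ∧ (∀ i, ((r:ℚ)*lam i).den = 1) ∧
          y = Real.logb 2 ((indepNum (confusionGraph n E
            (fun i => ((r:ℚ)*lam i).num.toNat)) : ℝ)) / r} with hFdef
      have hfacts : ∀ r : ℕ, 0 < r → (∀ i, ((r:ℚ)*lam i).den = 1) →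
          0 < Real.logb 2 ((indepNum (confusionGraph n E
              (fun i => ((r:ℚ)*lam i).num.toNat)) : ℝ)) ∧
          Real.logb 2 ((indepNum (confusionGraph n E
              (fun i => ((r:ℚ)*lam i).num.toNat)) : ℝ)) < (r:ℝ) * Lam := by
        intro r hr hden
        obtain ⟨D, hDne, hDpos, hDE⟩ := hD
        have h2 : 2 ≤ indepNum (confusionGraph n E (fun i => ((r:ℚ)*lam i).num.toNat)) :=
          two_le_indepNum_iff.mpr ⟨D, hDne, fun j hj => (hsupp r hr j).mpr (hDpos j hj), hDE⟩
        have hedge : ∃ x z, (confusionGraph n E (fun i => ((r:ℚ)*lam i).num.toNat)).Adj x z :=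
          exists_adj_iff.mpr ⟨j0, (hsupp r hr j0).mpr hj0pos, hj0E⟩
        have hlt := indepNum_lt_card _ hedge
        constructor
        · have := one_le_logb h2
          linarith
        · have hlt2 := logb_lt_logb_nat (show 0 < indepNum (confusionGraph n E
              (fun i => ((r:ℚ)*lam i).num.toNat)) by omega) hlt
          rw [card_confV, logb_two_pow, hsum r hr hden] at hlt2
          exact hlt2
      have hFprop : ∀ y ∈ F, 0 < y ∧ y < Lam := by
        rintro y ⟨r, hr, hden, rfl⟩
        obtain ⟨hL0, hLlt⟩ := hfacts r hr hden
        have hrpos : (0:ℝ) < (r:ℝ) := Nat.cast_pos.mpr hr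
        refine ⟨div_pos hL0 hrpos, (div_lt_iff₀ hrpos).mpr (by linarith)⟩
      have hFne : F.Nonempty := ⟨_, r0, hr0pos, hr0den, rfl⟩
      have hAeq : {x : ℝ | ∃ r : ℕ, 0 < r ∧ (∀ i, ((r : ℚ) * lam i).den = 1) ∧
          x = (r : ℝ) / Real.logb 2 (fracChromaticNumber
                (confusionGraph n E (fun i => ((r : ℚ) * lam i).num.toNat)))}
          = (fun y => 1/(Lam - y)) '' F := by
        ext x
        simp only [Set.mem_setOf_eq, Set.mem_image, hFdef]
        constructor
        · rintro ⟨r, hr, hden, rfl⟩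
          refine ⟨Real.logb 2 ((indepNum (confusionGraph n E
              (fun i => ((r:ℚ)*lam i).num.toNat)) : ℝ)) / r, ⟨r, hr, hden, rfl⟩, ?_⟩
          rw [keylog r hr hden]
          exact (alg_div_eq (r := (r:ℝ)) (Nat.cast_pos.mpr hr)).symm
        · rintro ⟨y, ⟨r, hr, hden, rfl⟩, rfl⟩
          refine ⟨r, hr, hden, ?_⟩
          rw [keylog r hr hden]
          exact (alg_div_eq (r := (r:ℝ)) (Nat.cast_pos.mpr hr)).symm
      have hBeq : {x : ℝ | ∃ r : ℕ, 0 < r ∧ (∀ i, ((r : ℚ) * lam i).den = 1) ∧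
          x = (r : ℝ) / Real.logb 2 ((indepNum
            (confusionGraph n E (fun i => ((r : ℚ) * lam i).num.toNat)) : ℝ))}
          = (fun y => 1/y) '' F := by
        ext x
        simp only [Set.mem_setOf_eq, Set.mem_image, hFdef]
        constructor
        · rintro ⟨r, hr, hden, rfl⟩
          exact ⟨Real.logb 2 ((indepNum (confusionGraph n E
              (fun i => ((r:ℚ)*lam i).num.toNat)) : ℝ)) / r, ⟨r, hr, hden, rfl⟩,
            (alg_div_eq' (r:ℝ) _).symm⟩
        · rintro ⟨y, ⟨r, hr, hden, rfl⟩, rfl⟩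
          exact ⟨r, hr, hden, (alg_div_eq' (r:ℝ) _).symm⟩
      rw [hAeq, hBeq]
      exact final_calc Lam F hFne hFprop
    · -- independence number equal to 1 everywhere
      have hval1 : ∀ r : ℕ, 0 < r → (∀ i, ((r:ℚ)*lam i).den = 1) →
          indepNum (confusionGraph n E (fun i => ((r:ℚ)*lam i).num.toNat)) = 1 := by
        intro r hr hden
        have h1 : 1 ≤ indepNum (confusionGraph n E (fun i => ((r:ℚ)*lam i).num.toNat)) :=
          one_le_indepNum _
        have h2 : ¬ 2 ≤ indepNum (confusionGraph n E (fun i => ((r:ℚ)*lam i).num.toNat)) := by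
          intro h2
          obtain ⟨D, hDne, hDpos, hDE⟩ := two_le_indepNum_iff.mp h2
          exact hD ⟨D, hDne, fun j hj => (hsupp r hr j).mp (hDpos j hj), hDE⟩
        omega
      have hAeq : {x : ℝ | ∃ r : ℕ, 0 < r ∧ (∀ i, ((r : ℚ) * lam i).den = 1) ∧
          x = (r : ℝ) / Real.logb 2 (fracChromaticNumber
                (confusionGraph n E (fun i => ((r : ℚ) * lam i).num.toNat)))}
          = {1/Lam} := by
        ext x
        simp only [Set.mem_setOf_eq, Set.mem_singleton_iff]
        constructor
        · rintro ⟨r, hr, hden, rfl⟩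
          rw [keylog r hr hden, hval1 r hr hden]
          simp only [Nat.cast_one, Real.logb_one, sub_zero]
          rw [div_mul_eq_div_div, div_self (show (r:ℝ) ≠ 0 by exact_mod_cast hr.ne')]
        · rintro rfl
          refine ⟨r0, hr0pos, hr0den, ?_⟩
          rw [keylog r0 hr0pos hr0den, hval1 r0 hr0pos hr0den]
          simp only [Nat.cast_one, Real.logb_one, sub_zero]
          rw [div_mul_eq_div_div, div_self (show (r0:ℝ) ≠ 0 by exact_mod_cast hr0pos.ne')]
      have hBeq : {x : ℝ | ∃ r : ℕ, 0 < r ∧ (∀ i, ((r : ℚ) * lam i).den = 1) ∧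
          x = (r : ℝ) / Real.logb 2 ((indepNum
            (confusionGraph n E (fun i => ((r : ℚ) * lam i).num.toNat)) : ℝ))}
          = {(0:ℝ)} := by
        ext x
        simp only [Set.mem_setOf_eq, Set.mem_singleton_iff]
        constructor
        · rintro ⟨r, hr, hden, rfl⟩
          rw [hval1 r hr hden]
          simp only [Nat.cast_one, Real.logb_one, div_zero]
        · rintro rfl
          refine ⟨r0, hr0pos, hr0den, ?_⟩
          rw [hval1 r0 hr0pos hr0den]
          simp only [Nat.cast_one, Real.logb_one, div_zero]
      rw [hAeq, hBeq, csSup_singleton, csInf_singleton, one_div_one_div]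
      norm_num
  · -- no edges at all
    have hval : ∀ r : ℕ, 0 < r → (∀ i, ((r:ℚ) * lam i).den = 1) →
        Real.logb 2 ((indepNum (confusionGraph n E
          (fun i => ((r:ℚ) * lam i).num.toNat)) : ℝ)) = (r:ℝ) * Lam := by
      intro r hr hden
      have hnoadj : ∀ u v, ¬ (confusionGraph n E
          (fun i => ((r:ℚ) * lam i).num.toNat)).Adj u v := by
        intro u v hadj
        obtain ⟨j, htj, hEj⟩ := exists_adj_iff.mp ⟨u, v, hadj⟩
        exact hE ⟨j, (hsupp r hr j).mp htj, hEj⟩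
      rw [indepNum_eq_card_of_no_adj _ hnoadj, card_confV, logb_two_pow]
      exact hsum r hr hden
    have hAeq : {x : ℝ | ∃ r : ℕ, 0 < r ∧ (∀ i, ((r : ℚ) * lam i).den = 1) ∧
        x = (r : ℝ) / Real.logb 2 (fracChromaticNumber
              (confusionGraph n E (fun i => ((r : ℚ) * lam i).num.toNat)))}
        = {(0:ℝ)} := by
      ext x
      simp only [Set.mem_setOf_eq, Set.mem_singleton_iff]
      constructor
      · rintro ⟨r, hr, hden, rfl⟩
        rw [keylog r hr hden, hval r hr hden, sub_self, div_zero]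
      · rintro rfl
        exact ⟨r0, hr0pos, hr0den, by
          rw [keylog r0 hr0pos hr0den, hval r0 hr0pos hr0den, sub_self, div_zero]⟩
    rw [hAeq, csSup_singleton]
    by_cases hL : Lam = 0
    · have hBeq : {x : ℝ | ∃ r : ℕ, 0 < r ∧ (∀ i, ((r : ℚ) * lam i).den = 1) ∧
          x = (r : ℝ) / Real.logb 2 ((indepNum
            (confusionGraph n E (fun i => ((r : ℚ) * lam i).num.toNat)) : ℝ))}
          = {(0:ℝ)} := by
        ext x
        simp only [Set.mem_setOf_eq, Set.mem_singleton_iff]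
        constructor
        · rintro ⟨r, hr, hden, rfl⟩
          rw [hval r hr hden, hL, mul_zero, div_zero]
        · rintro rfl
          exact ⟨r0, hr0pos, hr0den, by
            rw [hval r0 hr0pos hr0den, hL, mul_zero, div_zero]⟩
      rw [hBeq, csInf_singleton, hL]
      norm_num
    · have hLpos : 0 < Lam := lt_of_le_of_ne hLamnn (Ne.symm hL)
      have hBeq : {x : ℝ | ∃ r : ℕ, 0 < r ∧ (∀ i, ((r : ℚ) * lam i).den = 1) ∧
          x = (r : ℝ) / Real.logb 2 ((indepNum
            (confusionGraph n E (fun i => ((r : ℚ) * lam i).num.toNat)) : ℝ))}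
          = {1/Lam} := by
        ext x
        simp only [Set.mem_setOf_eq, Set.mem_singleton_iff]
        constructor
        · rintro ⟨r, hr, hden, rfl⟩
          rw [hval r hr hden, div_mul_eq_div_div,
            div_self (show (r:ℝ) ≠ 0 by exact_mod_cast hr.ne')]
        · rintro rfl
          exact ⟨r0, hr0pos, hr0den, by
            rw [hval r0 hr0pos hr0den, div_mul_eq_div_div,
              div_self (show (r0:ℝ) ≠ 0 by exact_mod_cast hr0pos.ne')]⟩
      rw [hBeq, csInf_singleton, one_div_one_div]
      norm_num
end
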